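/- arXiv:2008.10177 — 3 statements merged into one kernel-verified Lean document; each statement's English description precedes it below -/
import Mathlib

section
/- Let Y be a real-valued random variable with cumulative distribution function G, and define the generalized inverse G^{-1}(x) := inf{t ∈ ℝ : G(t) ≥ x}. Then Y = G^{-1}(G(Y)) almost surely. -/
open MeasureTheory

/-- Auxiliary: if every "left slice" of `S` within `S` is null, then `S` is null. -/
lemma aux_null (μ : Measure ℝ) (S : Set ℝ)
    (hS : ∀ y ∈ S, μ (S ∩ Set.Iic y) = 0) : μ S = 0 := by
  classical
  set U : Set ℝ :=
    ⋃ q : ℚ, if μ (S ∩ Set.Iic (q : ℝ)) = 0 then S ∩ Set.Iic (q : ℝ) else ∅ with hU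
  have hUnull : μ U = 0 := by
    apply measure_iUnion_null
    intro q
    split_ifs with h
    · exact h
    · exact measure_empty
  have hlt : ∀ a b, a ∈ S \ U → b ∈ S → a < b → False := by
    intro a b ha hb hab
    obtain ⟨q, hq1, hq2⟩ := exists_rat_btwn hab
    have hq0 : μ (S ∩ Set.Iic (q : ℝ)) = 0 :=
      measure_mono_null
        (Set.inter_subset_inter_right _ (Set.Iic_subset_Iic.mpr hq2.le)) (hS b hb)
    apply ha.2
    refine Set.mem_iUnion.mpr ⟨q, ?_⟩
    rw [if_pos hq0]
    exact ⟨ha.1, hq1.le⟩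
  have hsub : (S \ U).Subsingleton := by
    intro y1 h1 y2 h2
    rcases lt_trichotomy y1 y2 with h | h | h
    · exact (hlt y1 y2 h1 h2.1 h).elim
    · exact h
    · exact (hlt y2 y1 h2 h1.1 h).elim
  have hdiff : μ (S \ U) = 0 := by
    rcases hsub.eq_empty_or_singleton with h | ⟨c, h⟩
    · rw [h]; exact measure_empty
    · have hc : c ∈ S \ U := by rw [h]; exact Set.mem_singleton c
      rw [h]
      refine measure_mono_null ?_ (hS c hc.1)
      intro x hx
      rw [Set.mem_singleton_iff] at hx
      subst hx
      exact ⟨hc.1, Set.mem_Iic.mpr le_rfl⟩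
  refine le_antisymm ?_ zero_le
  calc μ S ≤ μ (U ∪ (S \ U)) := by
        apply measure_mono
        intro x hx
        by_cases hxU : x ∈ U
        · exact Or.inl hxU
        · exact Or.inr ⟨hx, hxU⟩
    _ ≤ μ U + μ (S \ U) := measure_union_le _ _
    _ = 0 := by rw [hUnull, hdiff, add_zero]

/-- Let `Y` be a real-valued random variable with cdf `G`, and let
`G⁻¹(x) := inf {t : G t ≥ x}` be the generalized inverse (quantile function).
Then `Y = G⁻¹(G(Y))` almost surely. -/
theorem quantile_cdf_eq_self_ae
    {Ω : Type*} [MeasurableSpace Ω] (P : Measure Ω) [IsProbabilityMeasure P]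
    (Y : Ω → ℝ) (hY : Measurable Y)
    (G : ℝ → ℝ) (hG : ∀ t, G t = (P {ω | Y ω ≤ t}).toReal)
    (Ginv : ℝ → ℝ) (hGinv : ∀ x, Ginv x = sInf {t : ℝ | x ≤ G t}) :
    ∀ᵐ ω ∂P, Y ω = Ginv (G (Y ω)) := by
  classical
  set μ := P.map Y with hμ
  have hGμ : ∀ t, G t = (μ (Set.Iic t)).toReal := by
    intro t
    rw [hG t, hμ, Measure.map_apply hY measurableSet_Iic]
    rfl
  -- flat region lemma
  have key : ∀ y t : ℝ, t < y → G y ≤ G t → μ (Set.Ioc t y) = 0 := by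
    intro y t hty hle
    rw [hGμ, hGμ] at hle
    have h1 : μ (Set.Iic y) ≤ μ (Set.Iic t) :=
      (ENNReal.toReal_le_toReal (measure_ne_top μ _) (measure_ne_top μ _)).mp hle
    have h2 : Set.Ioc t y = Set.Iic y \ Set.Iic t := (Set.Iic_sdiff_Iic).symm
    rw [h2, measure_diff (Set.Iic_subset_Iic.mpr hty.le)
      measurableSet_Iic.nullMeasurableSet (measure_ne_top μ _)]
    exact tsub_eq_zero_of_le h1
  set N : Set ℝ :=
    {y | μ (Set.Iic y) = 0} ∪
      ⋃ q : ℚ, {y | (q : ℝ) < y ∧ μ (Set.Ioc (q : ℝ) y) = 0} with hNdef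
  have hN : μ N = 0 := by
    apply measure_union_null
    · apply aux_null
      intro y hy
      exact measure_mono_null Set.inter_subset_right hy
    · apply measure_iUnion_null
      intro q
      apply aux_null
      intro y hy
      refine measure_mono_null ?_ hy.2
      intro x hx
      exact ⟨hx.1.1, hx.2⟩
  have hfix : ∀ y, y ∉ N → Ginv (G y) = y := by
    intro y hyN
    have hy2 : ∀ q : ℚ, (q : ℝ) < y → μ (Set.Ioc (q : ℝ) y) ≠ 0 := by
      intro q hq h
      exact hyN (Or.inr (Set.mem_iUnion.mpr ⟨q, hq, h⟩))
    have lb : ∀ t ∈ {t : ℝ | G y ≤ G t}, y ≤ t := by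
      intro t ht
      by_contra hlt
      push_neg at hlt
      have h0 := key y t hlt ht
      obtain ⟨q, hq1, hq2⟩ := exists_rat_btwn hlt
      exact hy2 q hq2 (measure_mono_null (Set.Ioc_subset_Ioc_left hq1.le) h0)
    rw [hGinv]
    apply le_antisymm
    · exact csInf_le ⟨y, lb⟩ (le_refl (G y))
    · exact le_csInf ⟨y, le_refl (G y)⟩ lb
  have hP : P (Y ⁻¹' N) = 0 :=
    le_antisymm (hN ▸ Measure.le_map_apply hY.aemeasurable N) zero_le
  rw [ae_iff]
  refine measure_mono_null ?_ hP
  intro ω hω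
  by_contra hmem
  exact hω (hfix (Y ω) hmem).symm
end

section
/- Let μ be a probability measure on ℝ, let (g_n)_{n≥1} be a sequence of nondecreasing functions ℝ → ℝ each lying in L²(μ), and suppose g_n → g in L²(μ) for some g ∈ L²(μ). Then there exists a nondecreasing function g̃ : ℝ → ℝ̄ (taking values in the extended reals) such that g̃ = g μ-almost everywhere. In particular, the set of (equivalence classes of) functions in L²(μ) admitting a nondecreasing μ-a.e. representative is closed in L²(μ). -/
open MeasureTheory Filter

/-- Let `μ` be a probability measure on `ℝ`, let `(gₙ)` be nondecreasing
functions in `L²(μ)` converging in `L²(μ)` to `g ∈ L²(μ)`. Then `g` has a nondecreasing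
`μ`-a.e. representative taking values in the extended reals. (In particular, the set of
classes in `L²(μ)` with a nondecreasing a.e. representative is closed in `L²(μ)`.) -/
theorem monotone_cone_closed_in_L2
    (μ : Measure ℝ) [IsProbabilityMeasure μ]
    (gseq : ℕ → ℝ → ℝ) (hmono : ∀ n, Monotone (gseq n))
    (hmem : ∀ n, MemLp (gseq n) 2 μ)
    (g : ℝ → ℝ) (hg : MemLp g 2 μ)
    (hconv : Tendsto (fun n => eLpNorm (gseq n - g) 2 μ) atTop (nhds 0)) :
    ∃ gtil : ℝ → EReal, Monotone gtil ∧ ∀ᵐ x ∂μ, gtil x = (g x : EReal) := by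
  have htm : TendstoInMeasure μ gseq atTop g :=
    tendstoInMeasure_of_tendsto_eLpNorm (by norm_num)
      (fun n => (hmem n).aestronglyMeasurable) hg.aestronglyMeasurable hconv
  obtain ⟨φ, hφ, hae⟩ := htm.exists_seq_tendsto_ae
  have hkey : ∀ x, Tendsto (fun n => gseq (φ n) x) atTop (nhds (g x)) →
      ∀ y, Tendsto (fun n => gseq (φ n) y) atTop (nhds (g y)) → y ≤ x → g y ≤ g x :=
    fun x hx y hy hyx => le_of_tendsto_of_tendsto' hy hx (fun n => hmono (φ n) hyx)
  refine ⟨fun x => sSup ((fun y => (g y : EReal)) ''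
    {y | Tendsto (fun n => gseq (φ n) y) atTop (nhds (g y)) ∧ y ≤ x}), ?_, ?_⟩
  · intro a b hab
    exact sSup_le_sSup (Set.image_mono (fun y hy => ⟨hy.1, hy.2.trans hab⟩))
  · filter_upwards [hae] with x hx
    apply le_antisymm
    · apply sSup_le
      rintro z ⟨y, ⟨hy, hyx⟩, rfl⟩
      exact EReal.coe_le_coe_iff.mpr <| hkey x hx y hy hyx
    · exact le_sSup ⟨x, ⟨hx, le_rfl⟩, rfl⟩
end

section
/- Let (X_1,Y_1),…,(X_n,Y_n) be i.i.d. copies of (X,Y). Let ℓ* : ℝ² → ℝ be measurable with E[ℓ*(X,Y)²] < ∞ and with E[ℓ*(X,Y) | X] = 0 almost surely and E[ℓ*(X,Y) | Y] = 0 almost surely. Let q, r : ℝⁿ → ℝ be measurable functions such that q(X_1,…,X_n) and r(Y_1,…,Y_n) are square-integrable. Then Cov( q(X_1,…,X_n) + r(Y_1,…,Y_n), ∑_{i=1}^n ℓ*(X_i,Y_i) ) = 0. -/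
open MeasureTheory ProbabilityTheory Filter
open scoped ENNReal

lemma mul_mem2_integrable {Ω : Type*} [MeasurableSpace Ω] {P : Measure Ω}
    {f g : Ω → ℝ} (hf : MemLp f 2 P) (hg : MemLp g 2 P) :
    Integrable (fun ω => f ω * g ω) P := by
  rw [← memLp_one_iff_integrable]
  have h : (1 : ℝ≥0∞) / 1 = 1 / 2 + 1 / 2 := by
    rw [one_div_one]; exact (ENNReal.add_halves 1).symm
  haveI : ENNReal.HolderTriple 2 2 1 := ⟨by rw [ENNReal.inv_two_add_inv_two, inv_one]⟩
  exact hg.smul hf (r := 1)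

lemma key_zero {Ω : Type*} [MeasurableSpace Ω] (P : Measure Ω) [IsProbabilityMeasure P]
    (X Y : Ω → ℝ) (hXY : Measurable fun ω => (X ω, Y ω))
    (l : ℝ → ℝ → ℝ) (hlmeas : Measurable fun p : ℝ × ℝ => l p.1 p.2)
    (hl2 : MemLp (fun ω => l (X ω) (Y ω)) 2 P)
    (hlX : P[(fun ω => l (X ω) (Y ω)) | MeasurableSpace.comap X inferInstance] =ᵐ[P] 0)
    (g : ℝ → ℝ) (hg : Measurable g)
    (hint : Integrable (fun ω => g (X ω) * l (X ω) (Y ω)) P) :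
    ∫ ω, g (X ω) * l (X ω) (Y ω) ∂P = 0 := by
  have hX : Measurable X := measurable_fst.comp hXY
  have hm : MeasurableSpace.comap X inferInstance ≤ _ := hX.comap_le
  have hL : Integrable (fun ω => l (X ω) (Y ω)) P := hl2.integrable one_le_two
  have hfSM : StronglyMeasurable[MeasurableSpace.comap X inferInstance] (fun ω => g (X ω)) :=
    (hg.comp (measurable_iff_comap_le.mpr le_rfl)).stronglyMeasurable
  have h1 : P[(fun ω => g (X ω)) * (fun ω => l (X ω) (Y ω)) |
      MeasurableSpace.comap X inferInstance] =ᵐ[P]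
      (fun ω => g (X ω)) * P[(fun ω => l (X ω) (Y ω)) | MeasurableSpace.comap X inferInstance] :=
    condExp_mul_of_stronglyMeasurable_left hfSM hint hL
  have h2 : (fun ω => g (X ω)) * P[(fun ω => l (X ω) (Y ω)) |
      MeasurableSpace.comap X inferInstance] =ᵐ[P] 0 := by
    filter_upwards [hlX] with ω h
    simp [Pi.mul_apply, h]
  calc ∫ ω, g (X ω) * l (X ω) (Y ω) ∂P
      = ∫ ω, (P[(fun ω => g (X ω)) * (fun ω => l (X ω) (Y ω)) |
          MeasurableSpace.comap X inferInstance]) ω ∂P := (integral_condExp hm).symm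
    _ = 0 := by rw [integral_congr_ae (h1.trans h2)]; simp

lemma key_zero_map {Ω : Type*} [MeasurableSpace Ω] (P : Measure Ω) [IsProbabilityMeasure P]
    (X Y : Ω → ℝ) (hXY : Measurable fun ω => (X ω, Y ω))
    (l : ℝ → ℝ → ℝ) (hlmeas : Measurable fun p : ℝ × ℝ => l p.1 p.2)
    (hl2 : MemLp (fun ω => l (X ω) (Y ω)) 2 P)
    (hlX : P[(fun ω => l (X ω) (Y ω)) | MeasurableSpace.comap X inferInstance] =ᵐ[P] 0)
    (g : ℝ → ℝ) (hg : Measurable g)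
    (hint : Integrable (fun p : ℝ × ℝ => g p.1 * l p.1 p.2)
      (P.map (fun ω => (X ω, Y ω)))) :
    ∫ p, g p.1 * l p.1 p.2 ∂(P.map (fun ω => (X ω, Y ω))) = 0 := by
  have hF : Measurable (fun p : ℝ × ℝ => g p.1 * l p.1 p.2) :=
    (hg.comp measurable_fst).mul hlmeas
  rw [integral_map hXY.aemeasurable hF.aestronglyMeasurable]
  exact key_zero P X Y hXY l hlmeas hl2 hlX g hg
    ((integrable_map_measure hF.aestronglyMeasurable hXY.aemeasurable).mp hint)

lemma key_zero_mapY {Ω : Type*} [MeasurableSpace Ω] (P : Measure Ω) [IsProbabilityMeasure P]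
    (X Y : Ω → ℝ) (hXY : Measurable fun ω => (X ω, Y ω))
    (l : ℝ → ℝ → ℝ) (hlmeas : Measurable fun p : ℝ × ℝ => l p.1 p.2)
    (hl2 : MemLp (fun ω => l (X ω) (Y ω)) 2 P)
    (hlY : P[(fun ω => l (X ω) (Y ω)) | MeasurableSpace.comap Y inferInstance] =ᵐ[P] 0)
    (g : ℝ → ℝ) (hg : Measurable g)
    (hint : Integrable (fun p : ℝ × ℝ => g p.2 * l p.1 p.2)
      (P.map (fun ω => (X ω, Y ω)))) :
    ∫ p, g p.2 * l p.1 p.2 ∂(P.map (fun ω => (X ω, Y ω))) = 0 := by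
  have hF : Measurable (fun p : ℝ × ℝ => g p.2 * l p.1 p.2) :=
    (hg.comp measurable_snd).mul hlmeas
  rw [integral_map hXY.aemeasurable hF.aestronglyMeasurable]
  exact key_zero P Y X ((measurable_snd.comp hXY).prodMk (measurable_fst.comp hXY))
    (fun b a => l a b) (hlmeas.comp measurable_swap) hl2 hlY g hg
    ((integrable_map_measure hF.aestronglyMeasurable hXY.aemeasurable).mp hint)

lemma cross_zero_X {Ω : Type*} [MeasurableSpace Ω] (P : Measure Ω) [IsProbabilityMeasure P]
    (n : ℕ)
    (X Y : Ω → ℝ) (hXY : Measurable fun ω => (X ω, Y ω))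
    (Xs Ys : ℕ → Ω → ℝ)
    (hmeas : ∀ i, Measurable fun ω => (Xs i ω, Ys i ω))
    (hindep : iIndepFun (fun i ω => (Xs i ω, Ys i ω)) P)
    (hident : ∀ i, IdentDistrib (fun ω => (Xs i ω, Ys i ω)) (fun ω => (X ω, Y ω)) P P)
    (l : ℝ → ℝ → ℝ) (hlmeas : Measurable fun p : ℝ × ℝ => l p.1 p.2)
    (hl2 : MemLp (fun ω => l (X ω) (Y ω)) 2 P)
    (hlX : P[(fun ω => l (X ω) (Y ω)) | MeasurableSpace.comap X inferInstance] =ᵐ[P] 0)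
    (q : (Fin n → ℝ) → ℝ) (hq : Measurable q)
    (hq2 : MemLp (fun ω => q (fun i => Xs i ω)) 2 P)
    (i : ℕ) (hi : i < n) :
    ∫ ω, q (fun j => Xs j ω) * l (Xs i ω) (Ys i ω) ∂P = 0 := by
  classical
  set μ : Measure (ℝ × ℝ) := P.map (fun ω => (X ω, Y ω)) with hμ
  haveI : IsProbabilityMeasure μ := Measure.isProbabilityMeasure_map hXY.aemeasurable
  set T : Finset ℕ := (Finset.range n).erase i with hT
  set Z : ℕ → Ω → ℝ × ℝ := fun j ω => (Xs j ω, Ys j ω) with hZ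
  set B : Ω → (T → ℝ × ℝ) := fun ω j => Z j ω with hBdef
  have hB : Measurable B := measurable_pi_lambda _ fun j => hmeas j
  have hAmap : P.map (Z i) = μ := (hident i).map_eq
  have hBA : IndepFun B (Z i) P := by
    have h := hindep.indepFun_finset T {i}
      (Finset.disjoint_singleton_right.mpr (Finset.notMem_erase i _)) hmeas
    exact h.comp measurable_id (measurable_pi_apply ⟨i, Finset.mem_singleton_self i⟩)
  have hmap : P.map (fun ω => (B ω, Z i ω)) = (P.map B).prod μ := by
    rw [← hAmap]
    exact (indepFun_iff_map_prod_eq_prod_map_map hB.aemeasurable (hmeas i).aemeasurable).mp hBA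
  haveI : IsProbabilityMeasure (P.map B) := Measure.isProbabilityMeasure_map hB.aemeasurable
  have hmem : ∀ (j : Fin n), (j : ℕ) ≠ i → (j : ℕ) ∈ T :=
    fun j h => Finset.mem_erase.mpr ⟨h, Finset.mem_range.mpr j.2⟩
  set Φ : ((T → ℝ × ℝ) × (ℝ × ℝ)) → ℝ := fun z =>
    q (fun j : Fin n => if h : (j : ℕ) = i then z.2.1 else (z.1 ⟨j, hmem j h⟩).1)
      * l z.2.1 z.2.2 with hΦdef
  have hΦmeas : Measurable Φ := by
    apply Measurable.mul
    · apply hq.comp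
      apply measurable_pi_lambda
      intro j
      by_cases h : (j : ℕ) = i
      · simp only [dif_pos h]
        exact measurable_fst.comp measurable_snd
      · simp only [dif_neg h]
        exact measurable_fst.comp ((measurable_pi_apply _).comp measurable_fst)
    · exact hlmeas.comp measurable_snd
  have hcomp : ∀ ω, Φ (B ω, Z i ω) = q (fun j => Xs j ω) * l (Xs i ω) (Ys i ω) := by
    intro ω
    simp only [hΦdef]
    congr 1
    congr 1
    funext j
    by_cases h : (j : ℕ) = i
    · simp only [dif_pos h]
      show Xs i ω = Xs (j : ℕ) ω
      rw [h]
    · simp only [dif_neg h]; rfl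
  have hli2 : MemLp (fun ω => l (Xs i ω) (Ys i ω)) 2 P :=
    (((hident i).comp hlmeas).symm).memLp_snd hl2
  have hQL : Integrable (fun ω => q (fun j => Xs j ω) * l (Xs i ω) (Ys i ω)) P :=
    mul_mem2_integrable hq2 hli2
  have hpair : Measurable (fun ω => (B ω, Z i ω)) := hB.prodMk (hmeas i)
  have hΦint : Integrable Φ ((P.map B).prod μ) := by
    rw [← hmap]
    refine (integrable_map_measure hΦmeas.aestronglyMeasurable hpair.aemeasurable).mpr ?_
    exact hQL.congr (Filter.Eventually.of_forall fun ω => (hcomp ω).symm)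
  calc ∫ ω, q (fun j => Xs j ω) * l (Xs i ω) (Ys i ω) ∂P
      = ∫ ω, Φ (B ω, Z i ω) ∂P :=
        integral_congr_ae (Filter.Eventually.of_forall fun ω => (hcomp ω).symm)
    _ = ∫ z, Φ z ∂(P.map (fun ω => (B ω, Z i ω))) :=
        (integral_map hpair.aemeasurable hΦmeas.aestronglyMeasurable).symm
    _ = ∫ z, Φ z ∂((P.map B).prod μ) := by rw [hmap]
    _ = ∫ c, ∫ p, Φ (c, p) ∂μ ∂(P.map B) := integral_prod Φ hΦint
    _ = 0 := by
        have hae : ∀ᵐ c ∂(P.map B), ∫ p, Φ (c, p) ∂μ = 0 := by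
          filter_upwards [hΦint.prod_right_ae] with c hc
          refine key_zero_map P X Y hXY l hlmeas hl2 hlX
            (fun a => q (fun j : Fin n => if h : (j : ℕ) = i then a else (c ⟨j, hmem j h⟩).1))
            ?_ hc
          apply hq.comp
          apply measurable_pi_lambda
          intro j
          by_cases h : (j : ℕ) = i
          · simp only [dif_pos h]; exact measurable_id
          · simp only [dif_neg h]; exact measurable_const
        rw [integral_congr_ae hae, integral_zero]

lemma cross_zero_Y {Ω : Type*} [MeasurableSpace Ω] (P : Measure Ω) [IsProbabilityMeasure P]
    (n : ℕ)
    (X Y : Ω → ℝ) (hXY : Measurable fun ω => (X ω, Y ω))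
    (Xs Ys : ℕ → Ω → ℝ)
    (hmeas : ∀ i, Measurable fun ω => (Xs i ω, Ys i ω))
    (hindep : iIndepFun (fun i ω => (Xs i ω, Ys i ω)) P)
    (hident : ∀ i, IdentDistrib (fun ω => (Xs i ω, Ys i ω)) (fun ω => (X ω, Y ω)) P P)
    (l : ℝ → ℝ → ℝ) (hlmeas : Measurable fun p : ℝ × ℝ => l p.1 p.2)
    (hl2 : MemLp (fun ω => l (X ω) (Y ω)) 2 P)
    (hlY : P[(fun ω => l (X ω) (Y ω)) | MeasurableSpace.comap Y inferInstance] =ᵐ[P] 0)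
    (r : (Fin n → ℝ) → ℝ) (hr : Measurable r)
    (hr2 : MemLp (fun ω => r (fun i => Ys i ω)) 2 P)
    (i : ℕ) (hi : i < n) :
    ∫ ω, r (fun j => Ys j ω) * l (Xs i ω) (Ys i ω) ∂P = 0 := by
  classical
  set μ : Measure (ℝ × ℝ) := P.map (fun ω => (X ω, Y ω)) with hμ
  haveI : IsProbabilityMeasure μ := Measure.isProbabilityMeasure_map hXY.aemeasurable
  set T : Finset ℕ := (Finset.range n).erase i with hT
  set Z : ℕ → Ω → ℝ × ℝ := fun j ω => (Xs j ω, Ys j ω) with hZ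
  set B : Ω → (T → ℝ × ℝ) := fun ω j => Z j ω with hBdef
  have hB : Measurable B := measurable_pi_lambda _ fun j => hmeas j
  have hAmap : P.map (Z i) = μ := (hident i).map_eq
  have hBA : IndepFun B (Z i) P := by
    have h := hindep.indepFun_finset T {i}
      (Finset.disjoint_singleton_right.mpr (Finset.notMem_erase i _)) hmeas
    exact h.comp measurable_id (measurable_pi_apply ⟨i, Finset.mem_singleton_self i⟩)
  have hmap : P.map (fun ω => (B ω, Z i ω)) = (P.map B).prod μ := by
    rw [← hAmap]
    exact (indepFun_iff_map_prod_eq_prod_map_map hB.aemeasurable (hmeas i).aemeasurable).mp hBA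
  haveI : IsProbabilityMeasure (P.map B) := Measure.isProbabilityMeasure_map hB.aemeasurable
  have hmem : ∀ (j : Fin n), (j : ℕ) ≠ i → (j : ℕ) ∈ T :=
    fun j h => Finset.mem_erase.mpr ⟨h, Finset.mem_range.mpr j.2⟩
  set Φ : ((T → ℝ × ℝ) × (ℝ × ℝ)) → ℝ := fun z =>
    r (fun j : Fin n => if h : (j : ℕ) = i then z.2.2 else (z.1 ⟨j, hmem j h⟩).2)
      * l z.2.1 z.2.2 with hΦdef
  have hΦmeas : Measurable Φ := by
    apply Measurable.mul
    · apply hr.comp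
      apply measurable_pi_lambda
      intro j
      by_cases h : (j : ℕ) = i
      · simp only [dif_pos h]
        exact measurable_snd.comp measurable_snd
      · simp only [dif_neg h]
        exact measurable_snd.comp ((measurable_pi_apply _).comp measurable_fst)
    · exact hlmeas.comp measurable_snd
  have hcomp : ∀ ω, Φ (B ω, Z i ω) = r (fun j => Ys j ω) * l (Xs i ω) (Ys i ω) := by
    intro ω
    simp only [hΦdef]
    congr 1
    congr 1
    funext j
    by_cases h : (j : ℕ) = i
    · simp only [dif_pos h]
      show Ys i ω = Ys (j : ℕ) ω
      rw [h]
    · simp only [dif_neg h]; rfl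
  have hli2 : MemLp (fun ω => l (Xs i ω) (Ys i ω)) 2 P :=
    (((hident i).comp hlmeas).symm).memLp_snd hl2
  have hRL : Integrable (fun ω => r (fun j => Ys j ω) * l (Xs i ω) (Ys i ω)) P :=
    mul_mem2_integrable hr2 hli2
  have hpair : Measurable (fun ω => (B ω, Z i ω)) := hB.prodMk (hmeas i)
  have hΦint : Integrable Φ ((P.map B).prod μ) := by
    rw [← hmap]
    refine (integrable_map_measure hΦmeas.aestronglyMeasurable hpair.aemeasurable).mpr ?_
    exact hRL.congr (Filter.Eventually.of_forall fun ω => (hcomp ω).symm)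
  calc ∫ ω, r (fun j => Ys j ω) * l (Xs i ω) (Ys i ω) ∂P
      = ∫ ω, Φ (B ω, Z i ω) ∂P :=
        integral_congr_ae (Filter.Eventually.of_forall fun ω => (hcomp ω).symm)
    _ = ∫ z, Φ z ∂(P.map (fun ω => (B ω, Z i ω))) :=
        (integral_map hpair.aemeasurable hΦmeas.aestronglyMeasurable).symm
    _ = ∫ z, Φ z ∂((P.map B).prod μ) := by rw [hmap]
    _ = ∫ c, ∫ p, Φ (c, p) ∂μ ∂(P.map B) := integral_prod Φ hΦint
    _ = 0 := by
        have hae : ∀ᵐ c ∂(P.map B), ∫ p, Φ (c, p) ∂μ = 0 := by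
          filter_upwards [hΦint.prod_right_ae] with c hc
          refine key_zero_mapY P X Y hXY l hlmeas hl2 hlY
            (fun b => r (fun j : Fin n => if h : (j : ℕ) = i then b else (c ⟨j, hmem j h⟩).2))
            ?_ hc
          apply hr.comp
          apply measurable_pi_lambda
          intro j
          by_cases h : (j : ℕ) = i
          · simp only [dif_pos h]; exact measurable_id
          · simp only [dif_neg h]; exact measurable_const
        rw [integral_congr_ae hae, integral_zero]
/-- Let `(X₁,Y₁),…,(Xₙ,Yₙ)` be i.i.d. copies of `(X,Y)` and let `ℓ*`
be square-integrable with `E[ℓ*(X,Y) | X] = 0` a.s. and `E[ℓ*(X,Y) | Y] = 0` a.s.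
Then for any square-integrable statistics `q(X₁,…,Xₙ)` and `r(Y₁,…,Yₙ)`,
`Cov(q(X₁,…,Xₙ) + r(Y₁,…,Yₙ), ∑ᵢ ℓ*(Xᵢ,Yᵢ)) = 0`. -/
theorem cov_additive_rank_statistic_efficient_score_eq_zero
    {Ω : Type*} [MeasurableSpace Ω] (P : Measure Ω) [IsProbabilityMeasure P]
    (n : ℕ)
    (X Y : Ω → ℝ) (hXY : Measurable fun ω => (X ω, Y ω))
    (Xs Ys : ℕ → Ω → ℝ)
    (hmeas : ∀ i, Measurable fun ω => (Xs i ω, Ys i ω))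
    (hindep : iIndepFun (fun i ω => (Xs i ω, Ys i ω)) P)
    (hident : ∀ i, IdentDistrib (fun ω => (Xs i ω, Ys i ω)) (fun ω => (X ω, Y ω)) P P)
    (l : ℝ → ℝ → ℝ) (hlmeas : Measurable fun p : ℝ × ℝ => l p.1 p.2)
    (hl2 : MemLp (fun ω => l (X ω) (Y ω)) 2 P)
    (hlX : P[(fun ω => l (X ω) (Y ω)) |
        MeasurableSpace.comap X inferInstance] =ᵐ[P] 0)
    (hlY : P[(fun ω => l (X ω) (Y ω)) |
        MeasurableSpace.comap Y inferInstance] =ᵐ[P] 0)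
    (q r : (Fin n → ℝ) → ℝ) (hq : Measurable q) (hr : Measurable r)
    (hq2 : MemLp (fun ω => q (fun i => Xs i ω)) 2 P)
    (hr2 : MemLp (fun ω => r (fun i => Ys i ω)) 2 P) :
    (∫ ω, (q (fun i => Xs i ω) + r (fun i => Ys i ω)) *
        (∑ i ∈ Finset.range n, l (Xs i ω) (Ys i ω)) ∂P)
      - (∫ ω, q (fun i => Xs i ω) + r (fun i => Ys i ω) ∂P)
        * (∫ ω, ∑ i ∈ Finset.range n, l (Xs i ω) (Ys i ω) ∂P) = 0 := by
  have hL2 : ∀ i : ℕ, MemLp (fun ω => l (Xs i ω) (Ys i ω)) 2 P := fun i =>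
    (((hident i).comp hlmeas).symm).memLp_snd hl2
  have hLint : ∀ i : ℕ, Integrable (fun ω => l (Xs i ω) (Ys i ω)) P := fun i =>
    (hL2 i).integrable one_le_two
  have hEL : ∀ i : ℕ, ∫ ω, l (Xs i ω) (Ys i ω) ∂P = 0 := by
    intro i
    have h1 : ∫ ω, l (Xs i ω) (Ys i ω) ∂P = ∫ ω, l (X ω) (Y ω) ∂P :=
      ((hident i).comp hlmeas).integral_eq
    rw [h1]
    have h := key_zero P X Y hXY l hlmeas hl2 hlX (fun _ => 1) measurable_const
      (by simpa using hl2.integrable one_le_two)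
    simpa using h
  have hsum2 : ∫ ω, ∑ i ∈ Finset.range n, l (Xs i ω) (Ys i ω) ∂P = 0 := by
    rw [integral_finset_sum _ fun i _ => hLint i]
    exact Finset.sum_eq_zero fun i _ => hEL i
  rw [hsum2, mul_zero, sub_zero]
  have hrw : ∀ ω, (q (fun i => Xs i ω) + r (fun i => Ys i ω)) *
      (∑ i ∈ Finset.range n, l (Xs i ω) (Ys i ω)) =
      ∑ i ∈ Finset.range n, (q (fun j => Xs j ω) * l (Xs i ω) (Ys i ω)
        + r (fun j => Ys j ω) * l (Xs i ω) (Ys i ω)) := by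
    intro ω
    rw [Finset.mul_sum]
    exact Finset.sum_congr rfl fun i _ => add_mul _ _ _
  have hint : ∀ i ∈ Finset.range n, Integrable (fun ω =>
      (q fun j => Xs (↑j) ω) * l (Xs i ω) (Ys i ω)
        + (r fun j => Ys (↑j) ω) * l (Xs i ω) (Ys i ω)) P := fun i _ =>
    (mul_mem2_integrable hq2 (hL2 i)).add (mul_mem2_integrable hr2 (hL2 i))
  rw [integral_congr_ae (Filter.Eventually.of_forall hrw), integral_finset_sum _ hint]
  refine Finset.sum_eq_zero fun i hi => ?_
  have hA : Integrable (fun ω => (q fun j => Xs (↑j) ω) * l (Xs i ω) (Ys i ω)) P :=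
    mul_mem2_integrable hq2 (hL2 i)
  have hB : Integrable (fun ω => (r fun j => Ys (↑j) ω) * l (Xs i ω) (Ys i ω)) P :=
    mul_mem2_integrable hr2 (hL2 i)
  rw [integral_add hA hB,
    cross_zero_X P n X Y hXY Xs Ys hmeas hindep hident l hlmeas hl2 hlX q hq hq2 i
      (Finset.mem_range.mp hi),
    cross_zero_Y P n X Y hXY Xs Ys hmeas hindep hident l hlmeas hl2 hlY r hr hr2 i
      (Finset.mem_range.mp hi), add_zero]
end
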